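/- Corollary 1 (bias reduction of CHIPS over IPS). Assume Assumption A3 (reward homogeneity, with cluster-level mean reward q̄) and q̄ a c ≥ 0 for all a, c. Then |Bias(ω_IPS)| − |Bias(ω_CHIPS)| = Σ_c p(c) · Σ_x p(x|c) · Σ_{a : π₀ x a = 0 and p(a|c,π₀) > 0} π x a · q̄ a c, where ω_IPS(x,c,a) = w(a,x) and ω_CHIPS(x,c,a) = w(a,c). In particular this difference is nonnegative. -/
import Mathlib


open Finset

namespace OPE

noncomputable section

variable {X C A : Type*} [Fintype X] [Fintype C] [Fintype A]
  [Nonempty X] [Nonempty C] [Nonempty A]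

/-- Cluster marginal `p(c) = Σ_x pX x * pC x c`. -/
def pc (pX : X → ℝ) (pC : X → C → ℝ) (c : C) : ℝ :=
  ∑ x, pX x * pC x c

/-- Conditional context distribution `p(x|c)` (zero when `p(c) = 0`). -/
def pxc (pX : X → ℝ) (pC : X → C → ℝ) (x : X) (c : C) : ℝ :=
  pX x * pC x c / pc pX pC c

/-- `p(a|c,ρ) = Σ_x p(x|c) * ρ x a`. -/
def pac (pX : X → ℝ) (pC : X → C → ℝ) (ρ : X → A → ℝ) (c : C) (a : A) : ℝ :=
  ∑ x, pxc pX pC x c * ρ x a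

/-- IPS weight `w(a,x) = π x a / π₀ x a` (with the convention `t/0 = 0`). -/
def wIPS (π π₀ : X → A → ℝ) (a : A) (x : X) : ℝ := π x a / π₀ x a

/-- CHIPS weight `w(a,c) = p(a|c,π) / p(a|c,π₀)` (with the convention `t/0 = 0`). -/
def wCHIPS (pX : X → ℝ) (pC : X → C → ℝ) (π π₀ : X → A → ℝ) (a : A) (c : C) : ℝ :=
  pac pX pC π c a / pac pX pC π₀ c a

/-- Policy value `V(π)`. -/
def V (pX : X → ℝ) (pC : X → C → ℝ) (π : X → A → ℝ) (q : A → C → X → ℝ) : ℝ :=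
  ∑ x, ∑ c, ∑ a, pX x * pC x c * π x a * q a c x

/-- Single-sample mean of a weighted estimator under the logging distribution. -/
def mu (pX : X → ℝ) (pC : X → C → ℝ) (π₀ : X → A → ℝ) (q : A → C → X → ℝ)
    (ω : X → C → A → ℝ) : ℝ :=
  ∑ x, ∑ c, ∑ a, (pX x * pC x c * π₀ x a) * ω x c a * q a c x

/-- Bias of a weighted estimator. -/
def bias (pX : X → ℝ) (pC : X → C → ℝ) (π π₀ : X → A → ℝ) (q : A → C → X → ℝ)
    (ω : X → C → A → ℝ) : ℝ :=
  mu pX pC π₀ q ω - V pX pC π q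

/-- Single-sample variance of a weighted estimator. -/
def varW (pX : X → ℝ) (pC : X → C → ℝ) (π₀ : X → A → ℝ) (q m2 : A → C → X → ℝ)
    (ω : X → C → A → ℝ) : ℝ :=
  (∑ x, ∑ c, ∑ a, (pX x * pC x c * π₀ x a) * ω x c a ^ 2 * m2 a c x)
    - (mu pX pC π₀ q ω) ^ 2

/-- Single-sample mean squared error of a weighted estimator. -/
def mseW (pX : X → ℝ) (pC : X → C → ℝ) (π π₀ : X → A → ℝ) (q m2 : A → C → X → ℝ)
    (ω : X → C → A → ℝ) : ℝ :=
  (∑ x, ∑ c, ∑ a, (pX x * pC x c * π₀ x a) * ω x c a ^ 2 * m2 a c x)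
    - 2 * V pX pC π q * mu pX pC π₀ q ω + (V pX pC π q) ^ 2


section Aux

variable (pX : X → ℝ) (pC : X → C → ℝ)

lemma pc_nonneg (hpX0 : ∀ x, 0 ≤ pX x) (hpC0 : ∀ x c, 0 ≤ pC x c) (c : C) :
    0 ≤ pc pX pC c :=
  Finset.sum_nonneg fun x _ => mul_nonneg (hpX0 x) (hpC0 x c)

lemma pXC_zero (hpX0 : ∀ x, 0 ≤ pX x) (hpC0 : ∀ x c, 0 ≤ pC x c) {c : C}
    (h : pc pX pC c = 0) (x : X) : pX x * pC x c = 0 :=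
  (Finset.sum_eq_zero_iff_of_nonneg
    (fun x _ => mul_nonneg (hpX0 x) (hpC0 x c))).mp h x (Finset.mem_univ x)

lemma pc_mul_pxc (hpX0 : ∀ x, 0 ≤ pX x) (hpC0 : ∀ x c, 0 ≤ pC x c) (x : X) (c : C) :
    pc pX pC c * pxc pX pC x c = pX x * pC x c := by
  unfold pxc
  by_cases h : pc pX pC c = 0
  · rw [h, zero_mul, pXC_zero pX pC hpX0 hpC0 h x]
  · field_simp

lemma pxc_nonneg (hpX0 : ∀ x, 0 ≤ pX x) (hpC0 : ∀ x c, 0 ≤ pC x c) (x : X) (c : C) :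
    0 ≤ pxc pX pC x c :=
  div_nonneg (mul_nonneg (hpX0 x) (hpC0 x c)) (pc_nonneg pX pC hpX0 hpC0 c)

lemma pac_nonneg (hpX0 : ∀ x, 0 ≤ pX x) (hpC0 : ∀ x c, 0 ≤ pC x c)
    (ρ : X → A → ℝ) (hρ : ∀ x a, 0 ≤ ρ x a) (c : C) (a : A) :
    0 ≤ pac pX pC ρ c a :=
  Finset.sum_nonneg fun x _ => mul_nonneg (pxc_nonneg pX pC hpX0 hpC0 x c) (hρ x a)

lemma pc_mul_pac (hpX0 : ∀ x, 0 ≤ pX x) (hpC0 : ∀ x c, 0 ≤ pC x c)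
    (ρ : X → A → ℝ) (c : C) (a : A) :
    pc pX pC c * pac pX pC ρ c a = ∑ x, pX x * pC x c * ρ x a := by
  unfold pac
  rw [Finset.mul_sum]
  refine Finset.sum_congr rfl fun x _ => ?_
  rw [← mul_assoc, pc_mul_pxc pX pC hpX0 hpC0 x c]

lemma pac_zero_imp (hpX0 : ∀ x, 0 ≤ pX x) (hpC0 : ∀ x c, 0 ≤ pC x c)
    (π₀ : X → A → ℝ) (hπ₀ : ∀ x a, 0 ≤ π₀ x a) {c : C} {a : A}
    (h : pac pX pC π₀ c a = 0) {x : X} (hx : π₀ x a ≠ 0) : pX x * pC x c = 0 := by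
  have hterm : pxc pX pC x c * π₀ x a = 0 :=
    (Finset.sum_eq_zero_iff_of_nonneg (fun y _ =>
      mul_nonneg (pxc_nonneg pX pC hpX0 hpC0 y c) (hπ₀ y a))).mp h x (Finset.mem_univ x)
  have hpxc : pxc pX pC x c = 0 := by
    rcases mul_eq_zero.mp hterm with h' | h'
    · exact h'
    · exact absurd h' hx
  rw [← pc_mul_pxc pX pC hpX0 hpC0 x c, hpxc, mul_zero]

lemma sum_swap3 (f : X → C → A → ℝ) :
    (∑ x, ∑ c, ∑ a, f x c a) = ∑ c, ∑ a, ∑ x, f x c a := by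
  rw [Finset.sum_comm]
  exact Finset.sum_congr rfl fun c _ => Finset.sum_comm

end Aux

/-- Corollary 1 (bias reduction of CHIPS over IPS). -/
theorem cor1_bias_reduction
    (pX : X → ℝ) (pC : X → C → ℝ) (π π₀ : X → A → ℝ)
    (q : A → C → X → ℝ) (qbar : A → C → ℝ)
    (hpX0 : ∀ x, 0 ≤ pX x) (hpX1 : ∑ x, pX x = 1)
    (hpC0 : ∀ x c, 0 ≤ pC x c) (hpC1 : ∀ x, ∑ c, pC x c = 1)
    (hπ : ∀ x a, 0 ≤ π x a) (hπ1 : ∀ x, ∑ a, π x a = 1)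
    (hπ₀ : ∀ x a, 0 ≤ π₀ x a) (hπ₀1 : ∀ x, ∑ a, π₀ x a = 1)
    (hA3 : ∀ (a : A) (c : C) (x : X), q a c x = qbar a c)
    (hqbar : ∀ a c, 0 ≤ qbar a c) :
    (|bias pX pC π π₀ q (fun x c a => wIPS π π₀ a x)|
      - |bias pX pC π π₀ q (fun x c a => wCHIPS pX pC π π₀ a c)|
      = ∑ c, pc pX pC c * ∑ x, pxc pX pC x c * ∑ a,
          if π₀ x a = 0 ∧ 0 < pac pX pC π₀ c a then π x a * qbar a c else 0) ∧
    (0 ≤ ∑ c, pc pX pC c * ∑ x, pxc pX pC x c * ∑ a,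
          if π₀ x a = 0 ∧ 0 < pac pX pC π₀ c a then π x a * qbar a c else 0) := by
  -- Abbreviations
  set S1 : ℝ := ∑ c, ∑ a, ∑ x,
      (if π₀ x a = 0 then pX x * pC x c * π x a * qbar a c else 0) with hS1def
  set S2 : ℝ := ∑ c, ∑ a, ∑ x,
      (if pac pX pC π₀ c a = 0 then pX x * pC x c * π x a * qbar a c else 0) with hS2def
  -- Bias of IPS
  have hbiasIPS : bias pX pC π π₀ q (fun x c a => wIPS π π₀ a x) = -S1 := by
    unfold bias mu V wIPS
    rw [hS1def, ← sum_swap3 (fun x c a => if π₀ x a = 0 then pX x * pC x c * π x a * qbar a c else 0)]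
    rw [← Finset.sum_sub_distrib, ← Finset.sum_neg_distrib]
    refine Finset.sum_congr rfl fun x _ => ?_
    rw [← Finset.sum_sub_distrib, ← Finset.sum_neg_distrib]
    refine Finset.sum_congr rfl fun c _ => ?_
    rw [← Finset.sum_sub_distrib, ← Finset.sum_neg_distrib]
    refine Finset.sum_congr rfl fun a _ => ?_
    rw [hA3]
    by_cases h : π₀ x a = 0
    · simp [h]
    · rw [if_neg h]
      field_simp
      ring
  have hS1nonneg : 0 ≤ S1 := by
    refine Finset.sum_nonneg fun c _ => Finset.sum_nonneg fun a _ =>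
      Finset.sum_nonneg fun x _ => ?_
    split
    · exact mul_nonneg (mul_nonneg (mul_nonneg (hpX0 x) (hpC0 x c)) (hπ x a)) (hqbar a c)
    · exact le_rfl
  -- Bias of CHIPS
  have hbiasCHIPS : bias pX pC π π₀ q (fun x c a => wCHIPS pX pC π π₀ a c) = -S2 := by
    unfold bias mu V wCHIPS
    rw [hS2def]
    rw [sum_swap3, sum_swap3 (f := fun x c a => pX x * pC x c * π x a * q a c x)]
    rw [← Finset.sum_sub_distrib, ← Finset.sum_neg_distrib]
    refine Finset.sum_congr rfl fun c _ => ?_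
    rw [← Finset.sum_sub_distrib, ← Finset.sum_neg_distrib]
    refine Finset.sum_congr rfl fun a _ => ?_
    simp only [hA3]
    have h1 : (∑ x, pX x * pC x c * π₀ x a * (pac pX pC π c a / pac pX pC π₀ c a)
          * qbar a c)
        = pc pX pC c * pac pX pC π₀ c a * (pac pX pC π c a / pac pX pC π₀ c a)
          * qbar a c := by
      rw [pc_mul_pac pX pC hpX0 hpC0 π₀ c a, Finset.sum_mul, Finset.sum_mul]
    have h2 : (∑ x, pX x * pC x c * π x a * qbar a c)
        = pc pX pC c * pac pX pC π c a * qbar a c := by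
      rw [pc_mul_pac pX pC hpX0 hpC0 π c a, Finset.sum_mul]
    rw [h1, h2, ← Finset.sum_neg_distrib]
    have h3 : (∑ x, -(if pac pX pC π₀ c a = 0
          then pX x * pC x c * π x a * qbar a c else 0))
        = -(if pac pX pC π₀ c a = 0 then pc pX pC c * pac pX pC π c a * qbar a c
            else 0) := by
      by_cases h : pac pX pC π₀ c a = 0
      · simp only [if_pos h, ← h2, Finset.sum_neg_distrib]
      · simp [h]
    rw [h3]
    by_cases h : pac pX pC π₀ c a = 0
    · simp [h]
    · rw [if_neg h]
      field_simp
      ring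
  have hS2nonneg : 0 ≤ S2 := by
    refine Finset.sum_nonneg fun c _ => Finset.sum_nonneg fun a _ =>
      Finset.sum_nonneg fun x _ => ?_
    split
    · exact mul_nonneg (mul_nonneg (mul_nonneg (hpX0 x) (hpC0 x c)) (hπ x a)) (hqbar a c)
    · exact le_rfl
  -- RHS rewriting
  have hRHS : (∑ c, pc pX pC c * ∑ x, pxc pX pC x c * ∑ a,
        if π₀ x a = 0 ∧ 0 < pac pX pC π₀ c a then π x a * qbar a c else 0)
      = ∑ c, ∑ a, ∑ x,
        (if π₀ x a = 0 ∧ 0 < pac pX pC π₀ c a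
          then pX x * pC x c * π x a * qbar a c else 0) := by
    refine Finset.sum_congr rfl fun c _ => ?_
    rw [Finset.mul_sum, Finset.sum_comm]
    refine Finset.sum_congr rfl fun x _ => ?_
    rw [← mul_assoc, pc_mul_pxc pX pC hpX0 hpC0 x c, Finset.mul_sum]
    refine Finset.sum_congr rfl fun a _ => ?_
    by_cases h : π₀ x a = 0 ∧ 0 < pac pX pC π₀ c a
    · rw [if_pos h, if_pos h]; ring
    · rw [if_neg h, if_neg h, mul_zero]
  -- Main identity: S1 - S2 = RHS
  have hmain : S1 - S2 = ∑ c, ∑ a, ∑ x,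
      (if π₀ x a = 0 ∧ 0 < pac pX pC π₀ c a
        then pX x * pC x c * π x a * qbar a c else 0) := by
    rw [hS1def, hS2def, ← Finset.sum_sub_distrib]
    refine Finset.sum_congr rfl fun c _ => ?_
    rw [← Finset.sum_sub_distrib]
    refine Finset.sum_congr rfl fun a _ => ?_
    rw [← Finset.sum_sub_distrib]
    refine Finset.sum_congr rfl fun x _ => ?_
    by_cases h1 : π₀ x a = 0
    · by_cases h2 : pac pX pC π₀ c a = 0
      · rw [if_pos h1, if_pos h2, if_neg (by rintro ⟨-, h⟩; rw [h2] at h; exact lt_irrefl 0 h)]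
        ring
      · have hpos : 0 < pac pX pC π₀ c a :=
          lt_of_le_of_ne (pac_nonneg pX pC hpX0 hpC0 π₀ hπ₀ c a) (Ne.symm h2)
        rw [if_pos h1, if_neg h2, if_pos ⟨h1, hpos⟩]
        ring
    · by_cases h2 : pac pX pC π₀ c a = 0
      · have hz : pX x * pC x c = 0 :=
          pac_zero_imp pX pC hpX0 hpC0 π₀ hπ₀ h2 h1
        rw [if_neg h1, if_pos h2, if_neg (by rintro ⟨h, -⟩; exact h1 h), hz]
        ring
      · rw [if_neg h1, if_neg h2, if_neg (by rintro ⟨h, -⟩; exact h1 h)]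
        ring
  constructor
  · rw [hbiasIPS, hbiasCHIPS, abs_neg, abs_neg, abs_of_nonneg hS1nonneg,
      abs_of_nonneg hS2nonneg, hRHS, hmain]
  · refine Finset.sum_nonneg fun c _ => mul_nonneg (pc_nonneg pX pC hpX0 hpC0 c) ?_
    refine Finset.sum_nonneg fun x _ =>
      mul_nonneg (pxc_nonneg pX pC hpX0 hpC0 x c) ?_
    refine Finset.sum_nonneg fun a _ => ?_
    split
    · exact mul_nonneg (hπ x a) (hqbar a c)
    · exact le_rfl

end

end OPE
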